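/- Let M'₁, M'₂ be matroids on a common finite ground set N' with w : N' → ℕ, 1 ≤ w(e) ≤ W, and let M₁, M₂ be their unfolded matroids on N. For every set S' ⊆ N' that is independent in both M'₁ and M'₂, the set S = {(e,i) : e ∈ S', 1 ≤ i ≤ w(e)} is independent in both M₁ and M₂ and has cardinality |S| = ∑_{e∈S'} w(e). Consequently, the maximum cardinality of a common independent set of M₁, M₂ is at least the maximum of ∑_{e∈S'} w(e) over all common independent sets S' of M'₁, M'₂. -/

import Mathlib

open Finset

/-- A matroid on a finite ground set, given by its family of independent sets. -/
structure FinMatroid (α : Type*) [DecidableEq α] [Fintype α] where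
  Indep : Finset α → Prop
  indep_empty : Indep ∅
  indep_subset : ∀ ⦃A B : Finset α⦄, A ⊆ B → Indep B → Indep A
  indep_exchange : ∀ ⦃A B : Finset α⦄, Indep A → Indep B → B.card < A.card →
    ∃ x ∈ A \ B, Indep (insert x B)

/-- The rank of a set `S` in a matroid: the size of a largest independent subset of `S`. -/
noncomputable def FinMatroid.rank {α : Type*} [DecidableEq α] [Fintype α]
    (M : FinMatroid α) (S : Finset α) : ℕ :=
  sSup {n : ℕ | ∃ I ⊆ S, M.Indep I ∧ I.card = n}

/-- The rank of `S` with respect to an arbitrary independence predicate. -/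
noncomputable def frank {β : Type*} (Ind : Finset β → Prop) (S : Finset β) : ℕ :=
  sSup {n : ℕ | ∃ I ⊆ S, Ind I ∧ I.card = n}

variable {α : Type*} [DecidableEq α] [Fintype α]

/-- The unfolded ground set `N = {(e,i) : e ∈ N', 1 ≤ i ≤ w e}`. -/
def unfoldGround (w : α → ℕ) : Finset (α × ℕ) :=
  Finset.univ.biUnion fun e => (Finset.Icc 1 (w e)).image fun i => (e, i)

/-- The `i`-th layer projection `{e ∈ N' : (e,i) ∈ I}`. -/
def proj1 (I : Finset (α × ℕ)) (i : ℕ) : Finset α :=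
  Finset.univ.filter fun e => (e, i) ∈ I

/-- The `i`-th reverse-layer projection `{e ∈ N' : (e, w e - i + 1) ∈ I}`. -/
def proj2 (w : α → ℕ) (I : Finset (α × ℕ)) (i : ℕ) : Finset α :=
  Finset.univ.filter fun e => i ≤ w e ∧ (e, w e - i + 1) ∈ I

/-- Independence in the unfolded matroid `M₁`. -/
def UnfoldIndep1 (M' : FinMatroid α) (w : α → ℕ) (W : ℕ) (I : Finset (α × ℕ)) : Prop :=
  I ⊆ unfoldGround w ∧ ∀ i ∈ Finset.Icc 1 W, M'.Indep (proj1 I i)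

/-- Independence in the unfolded matroid `M₂`. -/
def UnfoldIndep2 (M' : FinMatroid α) (w : α → ℕ) (W : ℕ) (I : Finset (α × ℕ)) : Prop :=
  I ⊆ unfoldGround w ∧ ∀ i ∈ Finset.Icc 1 W, M'.Indep (proj2 w I i)

/-- The unfolding `{(e,i) : e ∈ S', 1 ≤ i ≤ w e}` of a set `S' ⊆ N'`. -/
def unfoldSet (w : α → ℕ) (S' : Finset α) : Finset (α × ℕ) :=
  S'.biUnion fun e => (Finset.Icc 1 (w e)).image fun i => (e, i)

/-- for every common independent set `S'` of `M'₁, M'₂`, its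
unfolding is a common independent set of the unfolded matroids `M₁, M₂` of
cardinality `∑_{e ∈ S'} w e`; consequently the maximum cardinality of a common
independent set of `M₁, M₂` is at least the maximum weight of a common
independent set of `M'₁, M'₂`. -/
lemma mem_unfoldSet (w : α → ℕ) (S' : Finset α) (e : α) (i : ℕ) :
    (e, i) ∈ unfoldSet w S' ↔ e ∈ S' ∧ 1 ≤ i ∧ i ≤ w e := by
  simp [unfoldSet, Prod.ext_iff, and_assoc]

lemma unfoldSet_card (w : α → ℕ) (S' : Finset α) :
    (unfoldSet w S').card = ∑ e ∈ S', w e := by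
  rw [unfoldSet, Finset.card_biUnion]
  · refine Finset.sum_congr rfl fun e _ => ?_
    rw [Finset.card_image_of_injective _ (fun a b h => (Prod.ext_iff.mp h).2),
      Nat.card_Icc]
    omega
  · intro a _ b _ hab
    simp only [Finset.disjoint_left, Finset.mem_image, Finset.mem_Icc]
    rintro ⟨x, y⟩ ⟨i, _, h1⟩ ⟨j, _, h2⟩
    exact hab (((Prod.ext_iff.mp h1).1).trans ((Prod.ext_iff.mp h2).1).symm)

lemma main_part (M'₁ M'₂ : FinMatroid α) (w : α → ℕ) (W : ℕ)
    (hw : ∀ e : α, 1 ≤ w e ∧ w e ≤ W) (S' : Finset α)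
    (h1 : M'₁.Indep S') (h2 : M'₂.Indep S') :
    UnfoldIndep1 M'₁ w W (unfoldSet w S') ∧
      UnfoldIndep2 M'₂ w W (unfoldSet w S') ∧
      (unfoldSet w S').card = ∑ e ∈ S', w e := by
  have hsub : unfoldSet w S' ⊆ unfoldGround w := by
    rintro ⟨e, i⟩ h
    rw [mem_unfoldSet] at h
    simp only [unfoldGround, Finset.mem_biUnion, Finset.mem_univ, Finset.mem_image,
      Finset.mem_Icc]
    exact ⟨e, trivial, i, ⟨h.2.1, h.2.2⟩, rfl⟩
  refine ⟨⟨hsub, fun i hi => ?_⟩, ⟨hsub, fun i hi => ?_⟩, unfoldSet_card w S'⟩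
  · refine M'₁.indep_subset (B := S') ?_ h1
    intro e he
    simp only [proj1, Finset.mem_filter, mem_unfoldSet] at he
    exact he.2.1
  · refine M'₂.indep_subset (B := S') ?_ h2
    intro e he
    simp only [proj2, Finset.mem_filter, mem_unfoldSet] at he
    exact he.2.2.1

theorem unfold_common_indep (M'₁ M'₂ : FinMatroid α) (w : α → ℕ) (W : ℕ)
    (hw : ∀ e : α, 1 ≤ w e ∧ w e ≤ W) :
    (∀ S' : Finset α, M'₁.Indep S' → M'₂.Indep S' →
      UnfoldIndep1 M'₁ w W (unfoldSet w S') ∧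
      UnfoldIndep2 M'₂ w W (unfoldSet w S') ∧
      (unfoldSet w S').card = ∑ e ∈ S', w e) ∧
    sSup {n : ℕ | ∃ S' : Finset α, M'₁.Indep S' ∧ M'₂.Indep S' ∧ ∑ e ∈ S', w e = n} ≤
      sSup {n : ℕ | ∃ I : Finset (α × ℕ),
        UnfoldIndep1 M'₁ w W I ∧ UnfoldIndep2 M'₂ w W I ∧ I.card = n} := by
  refine ⟨main_part M'₁ M'₂ w W hw, ?_⟩
  apply csSup_le_csSup
  · refine ⟨(unfoldGround w).card, ?_⟩
    rintro n ⟨I, hI1, _, rfl⟩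
    exact Finset.card_le_card hI1.1
  · exact ⟨0, ∅, M'₁.indep_empty, M'₂.indep_empty, by simp⟩
  · rintro n ⟨S', h1, h2, rfl⟩
    obtain ⟨a, b, c⟩ := main_part M'₁ M'₂ w W hw S' h1 h2
    exact ⟨unfoldSet w S', a, b, c⟩
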